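/- For every μ ∈ ℝ and every T₀ > 0 there exists a constant C₃ > 0 such that for all T > T₀ and all p, q ∈ ℝ one has C₃(T + p² + q²) ≤ L_{T,μ}(p,q)^{-1}. -/

import Mathlib

open MeasureTheory Real Filter

/-- The function `L_{T,μ}(p,q)`, extended continuously across `p²+q² = 2μ`. -/
noncomputable def Lfun (T μ p q : ℝ) : ℝ :=
  if p ^ 2 + q ^ 2 = 2 * μ then (1 - Real.tanh ((p ^ 2 - μ) / (2 * T)) ^ 2) / (2 * T)
  else (Real.tanh ((p ^ 2 - μ) / (2 * T)) + Real.tanh ((q ^ 2 - μ) / (2 * T))) /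
    (p ^ 2 + q ^ 2 - 2 * μ)

/-- `B_{T,μ}(p,q) = L_{T,μ}((p+q)/2, (p−q)/2)`. -/
noncomputable def Bfun (T μ p q : ℝ) : ℝ := Lfun T μ ((p + q) / 2) ((p - q) / 2)

/-- `F_{T,μ}(p) = tanh((p²−μ)/(2T))/(p²−μ)`, extended by `1/(2T)` at `p² = μ`. -/
noncomputable def Ffun (T μ p : ℝ) : ℝ :=
  if p ^ 2 = μ then 1 / (2 * T) else Real.tanh ((p ^ 2 - μ) / (2 * T)) / (p ^ 2 - μ)

/-- `a_{T,μ} = (1/(4π)) ∫ B_{T,μ}(0,q) dq`. -/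
noncomputable def aconst (T μ : ℝ) : ℝ := (1 / (4 * Real.pi)) * ∫ q : ℝ, Bfun T μ 0 q

/-- `A_{T,μ}(p) = (1/(4π)) ∫ B_{T,μ}(p,q) dq`. -/
noncomputable def Afun (T μ p : ℝ) : ℝ := (1 / (4 * Real.pi)) * ∫ q : ℝ, Bfun T μ p q

lemma myHasDerivAt_tanh (x : ℝ) : HasDerivAt Real.tanh (1 / Real.cosh x ^ 2) x := by
  have h := (Real.hasDerivAt_sinh x).div (Real.hasDerivAt_cosh x) (Real.cosh_pos x).ne'
  have hfun : (fun y => Real.sinh y / Real.cosh y) = Real.tanh := by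
    funext y; rw [Real.tanh_eq_sinh_div_cosh]
  rw [show (Real.sinh / Real.cosh) = Real.tanh from hfun] at h
  refine h.congr_deriv ?_
  have := Real.cosh_sq_sub_sinh_sq x
  rw [div_left_inj' (by positivity)]
  nlinarith [Real.cosh_pos x]

lemma my_tanh_strictMono : StrictMono Real.tanh := by
  apply strictMono_of_deriv_pos
  intro x
  rw [(myHasDerivAt_tanh x).deriv]
  positivity

lemma my_tanh_lt_one (x : ℝ) : Real.tanh x < 1 := by
  rw [Real.tanh_eq_sinh_div_cosh, div_lt_one (Real.cosh_pos x)]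
  exact Real.sinh_lt_cosh x

lemma my_neg_one_lt_tanh (x : ℝ) : -1 < Real.tanh x := by
  have := my_tanh_lt_one (-x)
  rw [Real.tanh_neg] at this
  linarith

lemma my_tanh_sub_le {a b : ℝ} (h : b ≤ a) : Real.tanh a - Real.tanh b ≤ a - b := by
  have key := norm_image_sub_le_of_norm_deriv_le_segment'
    (f := Real.tanh) (f' := fun x => 1 / Real.cosh x ^ 2) (a := b) (b := a) (C := 1)
    (fun x _ => (myHasDerivAt_tanh x).hasDerivWithinAt)
    ?_ a (Set.right_mem_Icc.2 h)
  · rw [Real.norm_eq_abs] at key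
    have h2 := abs_le.1 key
    linarith [h2.2]
  · intro x _
    rw [Real.norm_eq_abs, abs_of_pos (by positivity)]
    rw [div_le_one (by positivity)]
    nlinarith [Real.one_le_cosh x]

lemma my_tanh_add_bound {x y : ℝ} (h : 0 < x + y) :
    0 < Real.tanh x + Real.tanh y ∧ Real.tanh x + Real.tanh y ≤ x + y := by
  have h1 : Real.tanh (-y) < Real.tanh x := my_tanh_strictMono (by linarith)
  have h2 : Real.tanh x - Real.tanh (-y) ≤ x - (-y) := my_tanh_sub_le (by linarith)
  rw [Real.tanh_neg] at h1 h2
  constructor <;> linarith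

lemma Lfun_pos {T : ℝ} (hT : 0 < T) (μ p q : ℝ) : 0 < Lfun T μ p q := by
  unfold Lfun
  set a := (p ^ 2 - μ) / (2 * T)
  set b := (q ^ 2 - μ) / (2 * T)
  split_ifs with h
  · apply div_pos _ (by positivity)
    have h1 := my_tanh_lt_one a
    have h2 := my_neg_one_lt_tanh a
    nlinarith
  · rcases lt_or_gt_of_ne (sub_ne_zero.2 h) with hlt | hgt
    · have hab : 0 < (-a) + (-b) := by
        have : a + b = (p ^ 2 + q ^ 2 - 2 * μ) / (2 * T) := by unfold a b; ring
        nlinarith [div_neg_of_neg_of_pos (sub_neg.mpr (sub_neg.mp hlt)) (by positivity : (0:ℝ) < 2*T), this]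
      have := (my_tanh_add_bound hab).1
      rw [Real.tanh_neg, Real.tanh_neg] at this
      exact div_pos_of_neg_of_neg (by linarith) (by linarith)
    · have hab : 0 < a + b := by
        have : a + b = (p ^ 2 + q ^ 2 - 2 * μ) / (2 * T) := by unfold a b; ring
        rw [this]; positivity
      exact div_pos (my_tanh_add_bound hab).1 (by linarith)

lemma Lfun_le_T {T : ℝ} (hT : 0 < T) (μ p q : ℝ) : Lfun T μ p q ≤ 1 / (2 * T) := by
  unfold Lfun
  set a := (p ^ 2 - μ) / (2 * T)
  set b := (q ^ 2 - μ) / (2 * T)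
  have hab : a + b = (p ^ 2 + q ^ 2 - 2 * μ) / (2 * T) := by unfold a b; ring
  split_ifs with h
  · apply div_le_div_of_nonneg_right _ (by positivity)
    nlinarith [sq_nonneg (Real.tanh a)]
  · have habeq : 1 / (2 * T) * (p ^ 2 + q ^ 2 - 2 * μ) = a + b := by
      rw [hab]; ring
    rcases lt_or_gt_of_ne (sub_ne_zero.2 h) with hlt | hgt
    · have h0 : 0 < (-a) + (-b) := by
        nlinarith [div_neg_of_neg_of_pos (sub_neg.mpr (sub_neg.mp hlt)) (by positivity : (0:ℝ) < 2*T)]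
      have h2 := (my_tanh_add_bound h0).2
      rw [Real.tanh_neg, Real.tanh_neg] at h2
      rw [div_le_iff_of_neg (by linarith)]
      linarith
    · have h0 : 0 < a + b := by rw [hab]; positivity
      have h2 := (my_tanh_add_bound h0).2
      rw [div_le_iff₀ (by linarith)]
      linarith

lemma Lfun_le_s {T : ℝ} (hT : 0 < T) (μ p q : ℝ) (hs : 4 * |μ| + 1 ≤ p ^ 2 + q ^ 2) :
    Lfun T μ p q ≤ 4 / (p ^ 2 + q ^ 2) := by
  have habs := abs_le.1 (le_refl |μ|)
  have hd : (p ^ 2 + q ^ 2) / 2 ≤ p ^ 2 + q ^ 2 - 2 * μ := by nlinarith [neg_abs_le μ]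
  have hs0 : (0:ℝ) < p ^ 2 + q ^ 2 := by nlinarith [abs_nonneg μ]
  have hne : p ^ 2 + q ^ 2 ≠ 2 * μ := by nlinarith [le_abs_self μ]
  unfold Lfun
  rw [if_neg hne]
  have h1 := my_tanh_lt_one ((p ^ 2 - μ) / (2 * T))
  have h2 := my_tanh_lt_one ((q ^ 2 - μ) / (2 * T))
  have hd0 : 0 < p ^ 2 + q ^ 2 - 2 * μ := by nlinarith
  calc (Real.tanh ((p ^ 2 - μ) / (2 * T)) + Real.tanh ((q ^ 2 - μ) / (2 * T))) /
      (p ^ 2 + q ^ 2 - 2 * μ) ≤ 2 / (p ^ 2 + q ^ 2 - 2 * μ) :=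
        div_le_div_of_nonneg_right (by linarith) hd0.le
    _ ≤ 2 / ((p ^ 2 + q ^ 2) / 2) :=
        div_le_div_of_nonneg_left (by norm_num) (by positivity) hd
    _ = 4 / (p ^ 2 + q ^ 2) := by rw [div_div_eq_mul_div]; ring

theorem lfun_inv_lower_bound_uniform (μ T₀ : ℝ) (hT₀ : 0 < T₀) :
    ∃ C₃ : ℝ, 0 < C₃ ∧ ∀ T : ℝ, T₀ < T → ∀ p q : ℝ,
      C₃ * (T + p ^ 2 + q ^ 2) ≤ (Lfun T μ p q)⁻¹ := by
  set R : ℝ := 4 * |μ| + 1 with hR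
  have hR0 : 0 < R := by positivity
  refine ⟨min (1/8) (T₀ / (T₀ + R)), lt_min (by norm_num) (by positivity), ?_⟩
  intro T hT p q
  have hTpos : 0 < T := hT₀.trans hT
  have hL := Lfun_pos hTpos μ p q
  have hLT : 2 * T ≤ (Lfun T μ p q)⁻¹ := by
    calc (2*T : ℝ) = (1 / (2*T))⁻¹ := by rw [one_div, inv_inv]
      _ ≤ (Lfun T μ p q)⁻¹ := inv_anti₀ hL (Lfun_le_T hTpos μ p q)
  rcases le_or_gt (p ^ 2 + q ^ 2) R with hcase | hcase
  · calc min (1/8) (T₀ / (T₀ + R)) * (T + p ^ 2 + q ^ 2)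
        ≤ (T₀ / (T₀ + R)) * (T + R) := by
          apply mul_le_mul (min_le_right _ _) (by linarith) (by positivity)
          positivity
      _ ≤ 2 * T := by
          rw [div_mul_eq_mul_div, div_le_iff₀ (by positivity)]
          nlinarith
      _ ≤ _ := hLT
  · have hLs : (p ^ 2 + q ^ 2) / 4 ≤ (Lfun T μ p q)⁻¹ := by
      have hs0 : (0:ℝ) < p ^ 2 + q ^ 2 := by linarith
      calc (p ^ 2 + q ^ 2) / 4 = (4 / (p ^ 2 + q ^ 2))⁻¹ := by
            rw [inv_div]
        _ ≤ (Lfun T μ p q)⁻¹ := by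
            apply inv_anti₀ hL (Lfun_le_s hTpos μ p q hcase.le)
    have h8 : (1/8 : ℝ) * (T + p ^ 2 + q ^ 2) ≤ (Lfun T μ p q)⁻¹ := by
      nlinarith
    calc min (1/8) (T₀ / (T₀ + R)) * (T + p ^ 2 + q ^ 2)
        ≤ (1/8) * (T + p ^ 2 + q ^ 2) := by
          apply mul_le_mul_of_nonneg_right (min_le_left _ _) (by positivity)
      _ ≤ _ := h8
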